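/- Let Ω ⊆ ℝ³ be a bounded open set and b a boundary point of Ω satisfying the exterior Lipschitz graph condition at b, and let B ⊆ ℝ³ be a bounded open set with closure(Ω) ⊆ B. Then there exist constants C > 0 and ε > 0 such that for every x ∈ Ω with ‖x − b‖ < ε, ∫_{B ∖ closure(Ω)} ‖z − x‖⁻⁴ dz ≤ C · ‖x − b‖ · ∫_{ℝ³ ∖ closure(Ω)} ‖z − x‖⁻⁶ dz. (The intermediate estimate, obtained via Hölder's inequality together with (B.4), in the proof of (B.5) of Lemma B.2.) -/

import Mathlib

open MeasureTheory Filter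
open scoped ENNReal Topology

set_option maxHeartbeats 800000

noncomputable section

/-- The identification of `ℝ² × ℝ` with `ℝ³`: `(s, t) ↦ (s₁, s₂, t)`. -/
def emb (s : EuclideanSpace ℝ (Fin 2)) (t : ℝ) : EuclideanSpace ℝ (Fin 3) :=
  (EuclideanSpace.equiv (Fin 3) ℝ).symm ![s 0, s 1, t]

/-- The exterior Lipschitz graph condition at a boundary point `b` of `Ω ⊆ ℝ³`. -/
def ExtLipschitzGraphCond (Ω : Set (EuclideanSpace ℝ (Fin 3)))
    (b : EuclideanSpace ℝ (Fin 3)) : Prop :=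
  ∃ δ > (0 : ℝ), ∃ A : EuclideanSpace ℝ (Fin 3) ≃ₗᵢ[ℝ] EuclideanSpace ℝ (Fin 3),
    ∃ φ : EuclideanSpace ℝ (Fin 2) → ℝ, ∃ L : NNReal, LipschitzWith L φ ∧ φ 0 = 0 ∧
      ∀ (s : EuclideanSpace ℝ (Fin 2)) (t : ℝ), φ s < t → ‖s‖ ^ 2 + t ^ 2 < δ ^ 2 →
        b + A (emb s t) ∈ (closure Ω)ᶜ

lemma emb_apply (s : EuclideanSpace ℝ (Fin 2)) (t : ℝ) (i : Fin 3) :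
    emb s t i = ![s 0, s 1, t] i := rfl

lemma emb_sub (s s' : EuclideanSpace ℝ (Fin 2)) (t t' : ℝ) :
    emb s t - emb s' t' = emb (s - s') (t - t') := by
  ext i
  fin_cases i <;> simp [emb_apply]

lemma norm_emb_sq (s : EuclideanSpace ℝ (Fin 2)) (t : ℝ) :
    ‖emb s t‖ ^ 2 = ‖s‖ ^ 2 + t ^ 2 := by
  have h3 : ‖emb s t‖ = Real.sqrt (∑ i : Fin 3, ‖emb s t i‖ ^ 2) := EuclideanSpace.norm_eq _
  have h2 : ‖s‖ = Real.sqrt (∑ i : Fin 2, ‖s i‖ ^ 2) := EuclideanSpace.norm_eq _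
  rw [h3, h2, Real.sq_sqrt (by positivity), Real.sq_sqrt (by positivity)]
  simp [Fin.sum_univ_three, Fin.sum_univ_two, emb_apply, sq_abs]

lemma norm_emb_zero (u : ℝ) (hu : 0 ≤ u) : ‖emb 0 u‖ = u := by
  have h := norm_emb_sq 0 u
  simp only [norm_zero] at h
  calc ‖emb 0 u‖ = Real.sqrt (‖emb 0 u‖ ^ 2) := (Real.sqrt_sq (norm_nonneg _)).symm
    _ = Real.sqrt (u ^ 2) := by rw [h]; ring_nf
    _ = u := Real.sqrt_sq hu

lemma exists_pow_two_le {y : ℝ} (hy : 1 ≤ y) : ∃ k : ℕ, 2 ^ k ≤ y ∧ y < 2 ^ (k + 1) := by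
  classical
  have hP : ∃ n : ℕ, y < 2 ^ n := pow_unbounded_of_one_lt y one_lt_two
  have hm : y < 2 ^ Nat.find hP := Nat.find_spec hP
  have hm0 : Nat.find hP ≠ 0 := by
    intro h
    rw [h] at hm; norm_num at hm; linarith
  obtain ⟨k, hk⟩ := Nat.exists_eq_succ_of_ne_zero hm0
  refine ⟨k, ?_, by rw [← Nat.succ_eq_add_one, ← hk]; exact hm⟩
  by_contra h
  push_neg at h
  exact Nat.find_min hP (by omega) h

lemma meas_aux (x : EuclideanSpace ℝ (Fin 3)) (n : ℕ) :
    Measurable fun z : EuclideanSpace ℝ (Fin 3) => ENNReal.ofReal (1 / ‖z - x‖ ^ n) := by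
  apply Measurable.ennreal_ofReal
  simp only [one_div]
  exact ((continuous_id.sub continuous_const).norm.pow n).measurable.inv

lemma far_bound (x : EuclideanSpace ℝ (Fin 3)) {r : ℝ} (hr : 0 < r) :
    ∫⁻ z in (Metric.closedBall x r)ᶜ, ENNReal.ofReal (1 / ‖z - x‖ ^ 4) ≤
      ENNReal.ofReal (16 / r) * volume (Metric.ball (0 : EuclideanSpace ℝ (Fin 3)) 1) := by
  set V := volume (Metric.ball (0 : EuclideanSpace ℝ (Fin 3)) 1) with hV
  set A : ℕ → Set (EuclideanSpace ℝ (Fin 3)) := fun k =>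
    Metric.closedBall x (r * 2 ^ (k + 1)) \ Metric.ball x (r * 2 ^ k) with hA
  have hcover : (Metric.closedBall x r)ᶜ ⊆ ⋃ k, A k := by
    intro z hz
    have hz' : r < ‖z - x‖ := by
      simpa [Metric.mem_closedBall, dist_eq_norm, not_le] using hz
    obtain ⟨k, hk1, hk2⟩ := exists_pow_two_le (y := ‖z - x‖ / r)
      ((one_le_div hr).2 hz'.le)
    refine Set.mem_iUnion.2 ⟨k, ?_, ?_⟩
    · rw [Metric.mem_closedBall, dist_eq_norm]
      rw [div_lt_iff₀ hr] at hk2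
      nlinarith
    · rw [Metric.mem_ball, dist_eq_norm, not_lt]
      rw [le_div_iff₀ hr] at hk1
      nlinarith
  calc ∫⁻ z in (Metric.closedBall x r)ᶜ, ENNReal.ofReal (1 / ‖z - x‖ ^ 4)
      ≤ ∫⁻ z in ⋃ k, A k, ENNReal.ofReal (1 / ‖z - x‖ ^ 4) := lintegral_mono_set hcover
    _ ≤ ∑' k, ∫⁻ z in A k, ENNReal.ofReal (1 / ‖z - x‖ ^ 4) := lintegral_iUnion_le _ _
    _ ≤ ∑' k, ENNReal.ofReal (8 / r) * (2⁻¹ : ℝ≥0∞) ^ k * V := by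
        refine ENNReal.tsum_le_tsum fun k => ?_
        have h1 : ∫⁻ z in A k, ENNReal.ofReal (1 / ‖z - x‖ ^ 4) ≤
            ∫⁻ _ in A k, ENNReal.ofReal (1 / (r * 2 ^ k) ^ 4) := by
          refine setLIntegral_mono' (by measurability) fun z hz => ?_
          have hz1 : r * 2 ^ k ≤ ‖z - x‖ := by
            have := hz.2
            simpa [Metric.mem_ball, dist_eq_norm, not_lt] using this
          exact ENNReal.ofReal_le_ofReal <| by
            apply one_div_le_one_div_of_le (by positivity)
            exact pow_le_pow_left₀ (by positivity) hz1 4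
        have h2 : volume (A k) ≤ ENNReal.ofReal ((r * 2 ^ (k + 1)) ^ 3) * V := by
          calc volume (A k) ≤ volume (Metric.closedBall x (r * 2 ^ (k + 1))) :=
                measure_mono Set.diff_subset
            _ = ENNReal.ofReal ((r * 2 ^ (k + 1)) ^ 3) * V := by
                rw [Measure.addHaar_closedBall _ _ (by positivity),
                  finrank_euclideanSpace_fin]
        calc ∫⁻ z in A k, ENNReal.ofReal (1 / ‖z - x‖ ^ 4)
            ≤ ENNReal.ofReal (1 / (r * 2 ^ k) ^ 4) * volume (A k) := by
              rw [← setLIntegral_const]; exact h1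
          _ ≤ ENNReal.ofReal (1 / (r * 2 ^ k) ^ 4) *
                (ENNReal.ofReal ((r * 2 ^ (k + 1)) ^ 3) * V) :=
              mul_le_mul_right h2 _
          _ = ENNReal.ofReal (8 / r) * (2⁻¹ : ℝ≥0∞) ^ k * V := by
              rw [← mul_assoc, ← ENNReal.ofReal_mul (by positivity)]
              congr 1
              have : (2⁻¹ : ℝ≥0∞) ^ k = ENNReal.ofReal ((2 : ℝ)⁻¹ ^ k) := by
                rw [ENNReal.ofReal_pow (by norm_num)]
                congr 1
                rw [ENNReal.ofReal_inv_of_pos (by norm_num)]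
                norm_num
              rw [this, ← ENNReal.ofReal_mul (by positivity)]
              congr 1
              rw [inv_pow]
              field_simp
              ring
    _ = ENNReal.ofReal (8 / r) * (∑' k : ℕ, (2⁻¹ : ℝ≥0∞) ^ k) * V := by
        rw [ENNReal.tsum_mul_right, ENNReal.tsum_mul_left]
    _ = ENNReal.ofReal (16 / r) * V := by
        rw [ENNReal.tsum_geometric]
        congr 1
        have h2 : (1 - 2⁻¹ : ℝ≥0∞)⁻¹ = 2 := by
          rw [ENNReal.one_sub_inv_two]
          simp
        rw [h2]
        rw [show (16 : ℝ) / r = (8 / r) * 2 by ring, ENNReal.ofReal_mul (by positivity)]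
        norm_num

/-- **The intermediate (Hölder + (B.4)) estimate in the proof of (B.5) of Lemma B.2.**
If `Ω ⊆ ℝ³` is a bounded open set, `b ∈ ∂Ω` satisfies the exterior Lipschitz graph condition,
and `B` is a bounded open set with `closure Ω ⊆ B`, then there exist `C > 0` and `ε > 0` such
that for all `x ∈ Ω` with `‖x − b‖ < ε`,
`∫_{B ∖ closure Ω} ‖z − x‖⁻⁴ dz ≤ C ‖x − b‖ ∫_{ℝ³ ∖ closure Ω} ‖z − x‖⁻⁶ dz`. -/
theorem intermediate_estimate_B5 (Ω : Set (EuclideanSpace ℝ (Fin 3))) (hΩo : IsOpen Ω)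
    (hΩb : Bornology.IsBounded Ω) (b : EuclideanSpace ℝ (Fin 3)) (hb : b ∈ frontier Ω)
    (hcond : ExtLipschitzGraphCond Ω b)
    (B : Set (EuclideanSpace ℝ (Fin 3))) (hBo : IsOpen B) (hBb : Bornology.IsBounded B)
    (hΩB : closure Ω ⊆ B) :
    ∃ C > (0 : ℝ), ∃ ε > (0 : ℝ), ∀ x ∈ Ω, ‖x - b‖ < ε →
      (∫⁻ z in B \ closure Ω, ENNReal.ofReal (1 / ‖z - x‖ ^ 4)) ≤
        ENNReal.ofReal (C * ‖x - b‖) *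
          ∫⁻ z in (closure Ω)ᶜ, ENNReal.ofReal (1 / ‖z - x‖ ^ 6) := by
  obtain ⟨δ, hδ, A, φ, L, hLip, hφ0, hgraph⟩ := hcond
  have hL0 : (0 : ℝ) ≤ (L : ℝ) := L.coe_nonneg
  set c : ℝ := (1 + (L : ℝ))⁻¹ ^ 3 / 4 ^ 6 with hc
  have hc0 : 0 < c := by positivity
  set ε : ℝ := δ / 3 with hε
  have hε0 : 0 < ε := by positivity
  set C : ℝ := ε * (1 + 16 / c) with hC
  have hC0 : 0 < C := by positivity
  refine ⟨C, hC0, ε, hε0, fun x hx hxb => ?_⟩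
  set V := volume (Metric.ball (0 : EuclideanSpace ℝ (Fin 3)) 1) with hV
  set I := ∫⁻ z in (closure Ω)ᶜ, ENNReal.ofReal (1 / ‖z - x‖ ^ 6) with hI
  set r := ‖x - b‖ with hr
  have hbΩ : b ∉ Ω := by
    rw [hΩo.frontier_eq] at hb
    exact hb.2
  have hr0 : 0 < r := by
    rw [hr, norm_pos_iff, sub_ne_zero]
    rintro rfl; exact hbΩ hx
  set ρ := r / (1 + (L : ℝ)) with hρ
  have hρ0 : 0 < ρ := by positivity
  have hρr : ρ ≤ r := div_le_self hr0.le (by linarith)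
  have hLρ : (1 + (L : ℝ)) * ρ = r := by rw [hρ]; field_simp [show (1 + (L:ℝ)) ≠ 0 by positivity]
  set p := b + A (emb 0 (2 * r)) with hp
  -- The ball around `p` lies in the exterior of `Ω`.
  have hball : Metric.ball p ρ ⊆ (closure Ω)ᶜ := by
    intro z hz
    set w := A.symm (z - b) with hwdef
    set s : EuclideanSpace ℝ (Fin 2) := (EuclideanSpace.equiv (Fin 2) ℝ).symm ![w 0, w 1]
      with hs
    set t := w 2 with ht
    have hw : emb s t = w := by
      ext i
      fin_cases i <;> rfl
    have hzdec : z = b + A (emb s t) := by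
      rw [hw, hwdef, A.apply_symm_apply, add_sub_cancel]
    have hzp : z - p = A (emb s (t - 2 * r)) := by
      rw [hzdec, hp]
      rw [add_sub_add_left_eq_sub, ← map_sub, emb_sub, sub_zero]
    have hnzp : ‖z - p‖ ^ 2 = ‖s‖ ^ 2 + (t - 2 * r) ^ 2 := by
      rw [hzp, A.norm_map, norm_emb_sq]
    have hzpρ : ‖z - p‖ < ρ := by
      rw [Metric.mem_ball, dist_eq_norm] at hz; exact hz
    have hs2 : ‖s‖ ^ 2 < ρ ^ 2 := by
      nlinarith [sq_nonneg (t - 2 * r), pow_lt_pow_left₀ hzpρ (norm_nonneg _) two_ne_zero]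
    have hsρ : ‖s‖ < ρ := lt_of_pow_lt_pow_left₀ 2 hρ0.le hs2
    have ht2 : (t - 2 * r) ^ 2 < ρ ^ 2 := by
      nlinarith [sq_nonneg ‖s‖, pow_lt_pow_left₀ hzpρ (norm_nonneg _) two_ne_zero]
    have htρ : |t - 2 * r| < ρ :=
      lt_of_pow_lt_pow_left₀ 2 hρ0.le (by rw [← sq_abs] at ht2; exact ht2)
    have hφs : φ s ≤ (L : ℝ) * ‖s‖ := by
      have := hLip.dist_le_mul s 0
      rw [hφ0, dist_zero_right, dist_zero_right] at this
      calc φ s ≤ |φ s| := le_abs_self _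
        _ ≤ (L : ℝ) * ‖s‖ := by simpa [Real.norm_eq_abs] using this
    have hφlt : φ s < t := by
      have h1 : (L : ℝ) * ‖s‖ ≤ (L : ℝ) * ρ := mul_le_mul_of_nonneg_left hsρ.le hL0
      have h2 : 2 * r - ρ < t := by
        have := abs_lt.1 htρ
        linarith [this.1]
      nlinarith
    have hsq : ‖s‖ ^ 2 + t ^ 2 < δ ^ 2 := by
      have hle : ‖emb s t‖ ≤ ‖emb s (t - 2 * r)‖ + ‖emb 0 (2 * r)‖ := by
        have : emb s t = emb s (t - 2 * r) + emb 0 (2 * r) := by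
          rw [show emb s (t - 2 * r) = emb s t - emb 0 (2 * r) by
            rw [emb_sub, sub_zero]]
          abel
        rw [this]; exact norm_add_le _ _
      have h1 : ‖emb s (t - 2 * r)‖ < ρ := by
        rw [← A.norm_map, ← hzp]; exact hzpρ
      have h2 : ‖emb 0 (2 * r)‖ = 2 * r := norm_emb_zero _ (by positivity)
      have h3 : ‖emb s t‖ < δ := by
        have hrδ : 3 * r < δ := by
          rw [hr]; rw [hε] at hxb; linarith
        linarith [hle, h1]
      calc ‖s‖ ^ 2 + t ^ 2 = ‖emb s t‖ ^ 2 := (norm_emb_sq s t).symm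
        _ < δ ^ 2 := pow_lt_pow_left₀ h3 (norm_nonneg _) two_ne_zero
    have := hgraph s t hφlt hsq
    rwa [← hzdec] at this
  -- Every point of the ball is at distance at most `4 r` from `x`.
  have hdist : ∀ z ∈ Metric.ball p ρ, ‖z - x‖ ≤ 4 * r := by
    intro z hz
    have h1 : ‖z - p‖ < ρ := by rw [Metric.mem_ball, dist_eq_norm] at hz; exact hz
    have h2 : ‖p - b‖ = 2 * r := by
      rw [hp, add_sub_cancel_left, A.norm_map]
      exact norm_emb_zero _ (by positivity)
    have h3 : ‖b - x‖ = r := by rw [norm_sub_rev]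
    have hzx : z - x = (z - p) + (p - b) + (b - x) := by abel
    calc ‖z - x‖ = ‖(z - p) + (p - b) + (b - x)‖ := by rw [← hzx]
      _ ≤ ‖z - p‖ + ‖p - b‖ + ‖b - x‖ := norm_add₃_le
      _ ≤ ρ + 2 * r + r := by linarith [h1]
      _ ≤ 4 * r := by linarith
  -- Lower bound for `I`.
  have hlow : ENNReal.ofReal (c / r ^ 3) * V ≤ I := by
    have hvol : volume (Metric.ball p ρ) = ENNReal.ofReal (ρ ^ 3) * V := by
      rw [Measure.addHaar_ball _ _ hρ0.le, finrank_euclideanSpace_fin]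
    have heq : c / r ^ 3 = 1 / (4 * r) ^ 6 * ρ ^ 3 := by
      rw [hc, hρ]
      field_simp
    calc ENNReal.ofReal (c / r ^ 3) * V
        = ENNReal.ofReal (1 / (4 * r) ^ 6) * volume (Metric.ball p ρ) := by
          rw [hvol, ← mul_assoc, ← ENNReal.ofReal_mul (by positivity), ← heq]
      _ ≤ ∫⁻ z in Metric.ball p ρ, ENNReal.ofReal (1 / ‖z - x‖ ^ 6) := by
          rw [← setLIntegral_const]
          refine setLIntegral_mono' measurableSet_ball fun z hz => ?_
          refine ENNReal.ofReal_le_ofReal ?_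
          have hzx : 0 < ‖z - x‖ := by
            rw [norm_pos_iff, sub_ne_zero]
            intro hzx
            exact hball hz (subset_closure (hzx ▸ hx))
          apply one_div_le_one_div_of_le (by positivity)
          exact pow_le_pow_left₀ hzx.le (hdist z hz) 6
      _ ≤ I := lintegral_mono_set hball
  -- Split the integral into near and far parts.
  have hsub : B \ closure Ω ⊆
      ((B \ closure Ω) ∩ Metric.closedBall x r) ∪ (Metric.closedBall x r)ᶜ := by
    intro z hz
    by_cases h : z ∈ Metric.closedBall x r
    · exact Or.inl ⟨hz, h⟩
    · exact Or.inr h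
  have hnear : ∫⁻ z in (B \ closure Ω) ∩ Metric.closedBall x r,
      ENNReal.ofReal (1 / ‖z - x‖ ^ 4) ≤ ENNReal.ofReal (r ^ 2) * I := by
    have hms : MeasurableSet ((B \ closure Ω) ∩ Metric.closedBall x r) :=
      (hBo.measurableSet.diff isClosed_closure.measurableSet).inter
        measurableSet_closedBall
    calc ∫⁻ z in (B \ closure Ω) ∩ Metric.closedBall x r, ENNReal.ofReal (1 / ‖z - x‖ ^ 4)
        ≤ ∫⁻ z in (B \ closure Ω) ∩ Metric.closedBall x r,
            ENNReal.ofReal (r ^ 2 * (1 / ‖z - x‖ ^ 6)) := by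
          refine setLIntegral_mono' hms fun z hz => ?_
          refine ENNReal.ofReal_le_ofReal ?_
          have hzr : ‖z - x‖ ≤ r := by
            have := hz.2
            rwa [Metric.mem_closedBall, dist_eq_norm] at this
          rcases eq_or_lt_of_le (norm_nonneg (z - x)) with h0 | h0
          · rw [← h0]
            norm_num
            try positivity
          · rw [div_le_iff₀ (by positivity), one_div, mul_comm (r ^ 2),
              mul_assoc, inv_mul_eq_div, le_div_iff₀ (by positivity)]
            have h6 : ‖z - x‖ ^ 6 = ‖z - x‖ ^ 2 * ‖z - x‖ ^ 4 := by ring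
            rw [h6]
            have : ‖z - x‖ ^ 2 ≤ r ^ 2 := pow_le_pow_left₀ (norm_nonneg _) hzr 2
            nlinarith [pow_nonneg (norm_nonneg (z - x)) 4]
      _ = ENNReal.ofReal (r ^ 2) *
            ∫⁻ z in (B \ closure Ω) ∩ Metric.closedBall x r,
              ENNReal.ofReal (1 / ‖z - x‖ ^ 6) := by
          simp_rw [ENNReal.ofReal_mul (by positivity : (0:ℝ) ≤ r ^ 2)]
          exact lintegral_const_mul' _ _ ENNReal.ofReal_ne_top
      _ ≤ ENNReal.ofReal (r ^ 2) * I :=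
          mul_le_mul_right (lintegral_mono_set fun z hz => hz.1.2) _
  have hfar : ∫⁻ z in (Metric.closedBall x r)ᶜ, ENNReal.ofReal (1 / ‖z - x‖ ^ 4) ≤
      ENNReal.ofReal (16 / c * r ^ 2) * I := by
    calc ∫⁻ z in (Metric.closedBall x r)ᶜ, ENNReal.ofReal (1 / ‖z - x‖ ^ 4)
        ≤ ENNReal.ofReal (16 / r) * V := far_bound x hr0
      _ = ENNReal.ofReal (16 / c * r ^ 2) * (ENNReal.ofReal (c / r ^ 3) * V) := by
          rw [← mul_assoc, ← ENNReal.ofReal_mul (by positivity)]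
          congr 2
          field_simp
      _ ≤ ENNReal.ofReal (16 / c * r ^ 2) * I := mul_le_mul_right hlow _
  calc ∫⁻ z in B \ closure Ω, ENNReal.ofReal (1 / ‖z - x‖ ^ 4)
      ≤ ∫⁻ z in ((B \ closure Ω) ∩ Metric.closedBall x r) ∪ (Metric.closedBall x r)ᶜ,
          ENNReal.ofReal (1 / ‖z - x‖ ^ 4) := lintegral_mono_set hsub
    _ ≤ (∫⁻ z in (B \ closure Ω) ∩ Metric.closedBall x r, ENNReal.ofReal (1 / ‖z - x‖ ^ 4)) +
          ∫⁻ z in (Metric.closedBall x r)ᶜ, ENNReal.ofReal (1 / ‖z - x‖ ^ 4) :=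
        lintegral_union_le _ _ _
    _ ≤ ENNReal.ofReal (r ^ 2) * I + ENNReal.ofReal (16 / c * r ^ 2) * I :=
        add_le_add hnear hfar
    _ = ENNReal.ofReal (r ^ 2 + 16 / c * r ^ 2) * I := by
        rw [ENNReal.ofReal_add (by positivity) (by positivity), add_mul]
    _ ≤ ENNReal.ofReal (C * r) * I := by
        refine mul_le_mul_left (ENNReal.ofReal_le_ofReal ?_) _
        have hK : (0:ℝ) < 1 + 16 / c := by positivity
        have heq : r ^ 2 + 16 / c * r ^ 2 = (1 + 16 / c) * r * r := by ring
        rw [heq, hC]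
        have hm := mul_le_mul_of_nonneg_right
          (mul_le_mul_of_nonneg_left hxb.le hK.le) hr0.le
        nlinarith [hm]
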